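/- Let P ≥ 0, k = sqrt((P+1)² + 1), h = 1 − sqrt((k−1)/(k+1)), and f(x) = (k−1)/(1−x)³ for 0 ≤ x < h, f(x) = 0 for h ≤ x ≤ 1. Let u1(a,b) = b(1−a) − a·P + θ(a,b)(1−a)(1−b) with θ(a,b) = 1 if a > b, 1/2 if a = b, 0 otherwise, and define U(a) = ∫_0^1 u1(a,y)·f(y) dy. Then U(a) = k − 1 − P for every a ∈ [0,h], and U(a) ≤ k − 1 − P for every a ∈ [0,1]. Hence the symmetric profile in which both players draw their move with density f is a Nash equilibrium with equilibrium utility u* = k − (P+1) for each player. -/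

import Mathlib

open MeasureTheory

/-- Tie-breaking function: 1 if `a > b`, 1/2 if `a = b`, 0 if `a < b`. -/
noncomputable def theta (a b : ℝ) : ℝ :=
  if a > b then 1 else if a = b then 1 / 2 else 0

/-- Expected utility of Player 1 in the two-player CfR game with penalty `P`
and reward `R = 1`. -/
noncomputable def u1 (P a b : ℝ) : ℝ :=
  b * (1 - a) - a * P + theta a b * ((1 - a) * (1 - b))

lemma key_integral (A B p q : ℝ) (hp : p < 1) (hq : q < 1) :
    ∫ y in p..q, (A + B * (1 - y)) / (1 - y) ^ 3 =
      (A / (2 * (1 - q) ^ 2) + B / (1 - q)) -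
      (A / (2 * (1 - p) ^ 2) + B / (1 - p)) := by
  have hne : ∀ y ∈ Set.uIcc p q, (1 : ℝ) - y ≠ 0 := by
    intro y hy
    have : y < 1 := lt_of_le_of_lt hy.2 (max_lt hp hq)
    linarith
  have main : ∫ y in p..q, (A + B * (1 - y)) / (1 - y) ^ 3 =
      (A / 2 * ((1 - q) ^ 2)⁻¹ + B * (1 - q)⁻¹) -
      (A / 2 * ((1 - p) ^ 2)⁻¹ + B * (1 - p)⁻¹) := by
    apply intervalIntegral.integral_eq_sub_of_hasDerivAt
    · intro y hy
      have h0 : (1:ℝ) - y ≠ 0 := hne y hy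
      have hd : HasDerivAt (fun y : ℝ => 1 - y) (-1) y := by
        simpa using (hasDerivAt_id y).const_sub 1
      have h1 : HasDerivAt (fun y : ℝ => ((1 - y) ^ 2)⁻¹)
          (-(2 * (1 - y) ^ 1 * (-1)) / ((1 - y) ^ 2) ^ 2) y :=
        (hd.pow 2).inv (pow_ne_zero _ h0)
      have h2 : HasDerivAt (fun y : ℝ => (1 - y)⁻¹) (-(-1) / (1 - y) ^ 2) y :=
        hd.inv h0
      have h3 := ((h1.const_mul (A / 2)).add (h2.const_mul B))
      have h4 : (A + B * (1 - y)) / (1 - y) ^ 3 = A / 2 * (-(2 * (1 - y) ^ 1 * (-1)) / ((1 - y) ^ 2) ^ 2) + B * (-(-1) / (1 - y) ^ 2) := by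
        field_simp
      rw [h4]
      exact h3
    · apply ContinuousOn.intervalIntegrable
      apply ContinuousOn.div
      · fun_prop
      · fun_prop
      · intro y hy; exact pow_ne_zero _ (hne y hy)
  rw [main]
  have hp' : (1:ℝ) - p ≠ 0 := by linarith
  have hq' : (1:ℝ) - q ≠ 0 := by linarith
  field_simp

lemma piece (F g : ℝ → ℝ) (p q : ℝ) (hpq : p ≤ q)
    (hg : ContinuousOn g (Set.Icc p q))
    (heq : ∀ᵐ y, y ∈ Set.Ioc p q → F y = g y) :
    IntervalIntegrable F MeasureTheory.volume p q ∧
      ∫ y in p..q, F y = ∫ y in p..q, g y := by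
  have hI : Set.uIcc p q = Set.Icc p q := Set.uIcc_of_le hpq
  have hO : Set.uIoc p q = Set.Ioc p q := Set.uIoc_of_le hpq
  have hgi : IntervalIntegrable g volume p q := by
    apply ContinuousOn.intervalIntegrable; rwa [hI]
  have hFg : F =ᵐ[volume.restrict (Set.Ioc p q)] g :=
    (ae_restrict_iff' measurableSet_Ioc).mpr heq
  constructor
  · rw [intervalIntegrable_iff, hO]
    rw [intervalIntegrable_iff, hO] at hgi
    exact hgi.congr hFg.symm
  · apply intervalIntegral.integral_congr_ae
    rwa [hO]

theorem stmt5 (P : ℝ) (hP : 0 ≤ P) (k h : ℝ)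
    (hk : k = Real.sqrt ((P + 1) ^ 2 + 1))
    (hh : h = 1 - Real.sqrt ((k - 1) / (k + 1)))
    (f : ℝ → ℝ)
    (hf : ∀ x ∈ Set.Icc (0 : ℝ) 1,
      f x = if x < h then (k - 1) / (1 - x) ^ 3 else 0)
    (U : ℝ → ℝ)
    (hU : ∀ a, U a = ∫ y in (0 : ℝ)..1, u1 P a y * f y) :
    (∀ a ∈ Set.Icc (0 : ℝ) h, U a = k - 1 - P) ∧
    (∀ a ∈ Set.Icc (0 : ℝ) 1, U a ≤ k - 1 - P) := by
  have hk2 : k ^ 2 = (P + 1) ^ 2 + 1 := by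
    rw [hk]; exact Real.sq_sqrt (by positivity)
  have hknn : 0 ≤ k := hk ▸ Real.sqrt_nonneg _
  have hk1 : 1 < k := by nlinarith
  set s := Real.sqrt ((k - 1) / (k + 1)) with hsdef
  have hfrac : 0 < (k - 1) / (k + 1) := div_pos (by linarith) (by linarith)
  have hs2 : s ^ 2 = (k - 1) / (k + 1) := Real.sq_sqrt hfrac.le
  have hs_pos : 0 < s := Real.sqrt_pos.mpr hfrac
  have hs1 : s < 1 := by
    nlinarith [(div_lt_one (show (0:ℝ) < k + 1 by linarith)).mpr
      (show k - 1 < k + 1 by linarith)]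
  have hkm : k - 1 ≠ 0 := by linarith
  have hkp : k + 1 ≠ 0 := by linarith
  have hks : k - 1 = s * (P + 1) := by
    have h1 : (k - 1) ^ 2 = (s * (P + 1)) ^ 2 := by
      rw [mul_pow, hs2]
      field_simp
      nlinarith
    have h2 : 0 ≤ s * (P + 1) := by positivity
    nlinarith
  have hh0 : 0 < h := by rw [hh]; linarith
  have hh1 : h < 1 := by rw [hh]; linarith
  have hsh : 1 - h = s := by rw [hh]; ring
  have hane : ∀ c : ℝ, ∀ᵐ y : ℝ, y ≠ c := by
    intro c
    rw [ae_iff]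
    simpa using measure_singleton c
  -- piece on [h, 1]: integrand is zero
  have p3 : ∀ a : ℝ,
      IntervalIntegrable (fun y => u1 P a y * f y) volume h 1 ∧
        ∫ y in h..(1:ℝ), u1 P a y * f y = ∫ y in h..(1:ℝ), (0:ℝ) := by
    intro a
    apply piece _ _ _ _ hh1.le continuousOn_const
    apply Filter.Eventually.of_forall
    intro y hy
    rw [hf y ⟨by linarith [hy.1], hy.2⟩, if_neg (by push_neg; exact hy.1.le)]
    ring
  -- value on [0, h]
  have val1 : ∀ a, 0 ≤ a → a ≤ h → U a = k - 1 - P := by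
    intro a ha0 hah
    have ha1 : a < 1 := lt_of_le_of_lt hah hh1
    have p1 : IntervalIntegrable (fun y => u1 P a y * f y) volume 0 a ∧
        ∫ y in (0:ℝ)..a, u1 P a y * f y =
          ∫ y in (0:ℝ)..a,
            ((k - 1) * (1 - a - a * P) + 0 * (1 - y)) / (1 - y) ^ 3 := by
      apply piece _ _ _ _ ha0
      · apply ContinuousOn.div
        · fun_prop
        · fun_prop
        · intro y hy
          have : y < 1 := lt_of_le_of_lt hy.2 ha1
          exact pow_ne_zero _ (by linarith)
      · filter_upwards [hane a] with y hy hmem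
        have hya : y < a := lt_of_le_of_ne hmem.2 hy
        have hyh : y < h := lt_of_lt_of_le hya hah
        rw [u1, theta, if_pos hya,
          hf y ⟨hmem.1.le, by linarith⟩, if_pos hyh]
        ring
    have p2 : IntervalIntegrable (fun y => u1 P a y * f y) volume a h ∧
        ∫ y in a..h, u1 P a y * f y =
          ∫ y in a..h,
            ((k - 1) * (1 - a - a * P) +
              (-((k - 1) * (1 - a))) * (1 - y)) / (1 - y) ^ 3 := by
      apply piece _ _ _ _ hah
      · apply ContinuousOn.div
        · fun_prop
        · fun_prop
        · intro y hy
          have : y < 1 := lt_of_le_of_lt hy.2 hh1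
          exact pow_ne_zero _ (by linarith)
      · filter_upwards [hane h] with y hy hmem
        have hya : a < y := hmem.1
        have hyh : y < h := lt_of_le_of_ne hmem.2 hy
        rw [u1, theta, if_neg (by linarith), if_neg (by linarith),
          hf y ⟨by linarith, by linarith⟩, if_pos hyh]
        ring
    have e12 := intervalIntegral.integral_add_adjacent_intervals p1.1 p2.1
    have e123 := intervalIntegral.integral_add_adjacent_intervals
      (p1.1.trans p2.1) (p3 a).1
    have d1 : (k - 1) * (1 - a - a * P) / (2 * s ^ 2) =
        (1 - a - a * P) * (k + 1) / 2 := by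
      rw [hs2]; field_simp
    have d2 : (-((k - 1) * (1 - a))) / s = -((1 - a) * (P + 1)) := by
      rw [hks]; field_simp
    have d3 : (-((k - 1) * (1 - a))) / (1 - a) = -(k - 1) := by
      have : (1:ℝ) - a ≠ 0 := by linarith
      field_simp
    rw [hU a, ← e123, ← e12, p1.2, p2.2, (p3 a).2, intervalIntegral.integral_zero,
      key_integral _ _ _ _ (by linarith) ha1,
      key_integral _ _ _ _ ha1 hh1, hsh, d1, d2, d3]
    ring
  -- value on [h, 1]
  have val2 : ∀ a, h ≤ a → a ≤ 1 → U a = 1 - a * (P + 1) := by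
    intro a hha ha1
    have p1 : IntervalIntegrable (fun y => u1 P a y * f y) volume 0 h ∧
        ∫ y in (0:ℝ)..h, u1 P a y * f y =
          ∫ y in (0:ℝ)..h,
            ((k - 1) * (1 - a - a * P) + 0 * (1 - y)) / (1 - y) ^ 3 := by
      apply piece _ _ _ _ hh0.le
      · apply ContinuousOn.div
        · fun_prop
        · fun_prop
        · intro y hy
          have : y < 1 := lt_of_le_of_lt hy.2 hh1
          exact pow_ne_zero _ (by linarith)
      · filter_upwards [hane h] with y hy hmem
        have hyh : y < h := lt_of_le_of_ne hmem.2 hy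
        have hya : y < a := lt_of_lt_of_le hyh hha
        rw [u1, theta, if_pos hya,
          hf y ⟨hmem.1.le, by linarith⟩, if_pos hyh]
        ring
    have e12 := intervalIntegral.integral_add_adjacent_intervals p1.1 (p3 a).1
    have d1 : (k - 1) * (1 - a - a * P) / (2 * s ^ 2) =
        (1 - a - a * P) * (k + 1) / 2 := by
      rw [hs2]; field_simp
    rw [hU a, ← e12, p1.2, (p3 a).2, intervalIntegral.integral_zero,
      key_integral _ _ _ _ (by linarith) hh1, hsh, d1]
    ring
  constructor
  · intro a ha
    exact val1 a ha.1 ha.2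
  · intro a ha
    rcases le_or_gt a h with hle | hlt
    · exact le_of_eq (val1 a ha.1 hle)
    · rw [val2 a hlt.le ha.2]
      have hmul : (1 - s) * (P + 1) ≤ a * (P + 1) := by
        apply mul_le_mul_of_nonneg_right _ (by linarith)
        rw [hh] at hlt; linarith
      nlinarith [hks]
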